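/- Define Jackson's q-sine and q-cosine as formal power series over Q(q): sin_q(z) = sum_{n≥0} (-1)^n z^(2n+1)/[2n+1]_q! and cos_q(z) = sum_{n≥0} (-1)^n z^(2n)/[2n]_q!. Then sin_q(z)·sin_{1/q}(z) + cos_q(z)·cos_{1/q}(z) = 1. -/

import Mathlib

noncomputable section
open Finset PowerSeries

abbrev Fq : Type := RatFunc ℚ

/-- The variable `q` as element of the field of rational functions `ℚ(q)`. -/
def qv : Fq := RatFunc.X

/-- The q-integer `[m]_q = 1 + q + ... + q^(m-1)`. -/
def qInt (x : Fq) (m : ℕ) : Fq := ∑ i ∈ Finset.range m, x ^ i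

/-- The q-factorial `[m]_q! = [1]_q [2]_q ⋯ [m]_q`. -/
def qFact (x : Fq) (m : ℕ) : Fq := ∏ i ∈ Finset.range m, qInt x (i + 1)

/-- Jackson's `sin_q(z) = ∑ (-1)^n z^(2n+1)/[2n+1]_q!`. -/
def qsin (x : Fq) : PowerSeries Fq :=
  PowerSeries.mk fun m => if m % 2 = 1 then (-1 : Fq) ^ (m / 2) / qFact x m else 0

/-- Jackson's `cos_q(z) = ∑ (-1)^n z^(2n)/[2n]_q!`. -/
def qcos (x : Fq) : PowerSeries Fq :=
  PowerSeries.mk fun m => if m % 2 = 0 then (-1 : Fq) ^ (m / 2) / qFact x m else 0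

/- ### Auxiliary lemmas -/

lemma qv_ne_zero : qv ≠ 0 := RatFunc.X_ne_zero

lemma qv_pow_ne_one (m : ℕ) (hm : m ≠ 0) : qv ^ m ≠ 1 := by
  intro h
  have : (Polynomial.X : Polynomial ℚ) ^ m = 1 := by
    apply RatFunc.algebraMap_injective ℚ
    simpa [qv, map_pow, RatFunc.algebraMap_X] using h
  have := congrArg Polynomial.natDegree this
  simp [Polynomial.natDegree_X_pow] at this
  exact hm this

lemma qInt_ne_zero (m : ℕ) (hm : m ≠ 0) : qInt qv m ≠ 0 := by
  intro h
  have hg := geom_sum_mul qv m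
  rw [show (∑ i ∈ range m, qv ^ i) = qInt qv m from rfl, h, zero_mul] at hg
  have : qv ^ m = 1 := by linear_combination -hg
  exact qv_pow_ne_one m hm this

lemma qFact_ne_zero (x : Fq) (m : ℕ) (h : ∀ i, i ≠ 0 → qInt x i ≠ 0) : qFact x m ≠ 0 := by
  apply Finset.prod_ne_zero_iff.2
  intro i _
  exact h (i+1) (Nat.succ_ne_zero i)

lemma qFactq_ne_zero (m : ℕ) : qFact qv m ≠ 0 :=
  qFact_ne_zero qv m qInt_ne_zero

lemma qFact_succ (x : Fq) (m : ℕ) : qFact x (m + 1) = qFact x m * qInt x (m + 1) :=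
  Finset.prod_range_succ _ _

/-- `[m]_{1/q} · q^{m-1} = [m]_q` -/
lemma qInt_inv (m : ℕ) : qInt qv⁻¹ (m+1) * qv ^ m = qInt qv (m+1) := by
  unfold qInt
  rw [Finset.sum_mul]
  rw [← Finset.sum_range_reflect]
  apply Finset.sum_congr rfl
  intro i hi
  rw [Finset.mem_range] at hi
  rw [inv_pow, inv_mul_eq_div, div_eq_iff (pow_ne_zero _ qv_ne_zero), ← pow_add]
  congr 1
  omega

lemma qInt_inv_ne_zero (m : ℕ) (hm : m ≠ 0) : qInt qv⁻¹ m ≠ 0 := by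
  obtain ⟨k, rfl⟩ := Nat.exists_eq_succ_of_ne_zero hm
  intro h
  have := qInt_inv k
  rw [h, zero_mul] at this
  exact qInt_ne_zero (k+1) (Nat.succ_ne_zero k) this.symm

lemma qFactq_inv_ne_zero (m : ℕ) : qFact qv⁻¹ m ≠ 0 :=
  qFact_ne_zero qv⁻¹ m qInt_inv_ne_zero

/-- exponent `0 + 1 + ⋯ + (m-1) = m(m-1)/2` -/
def c2 (m : ℕ) : ℕ := ∑ i ∈ Finset.range m, i

lemma c2_succ (m : ℕ) : c2 (m + 1) = c2 m + m := Finset.sum_range_succ _ _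

/-- `[m]_{1/q}! · q^{m(m-1)/2} = [m]_q!` -/
lemma qFact_inv (m : ℕ) : qFact qv⁻¹ m * qv ^ c2 m = qFact qv m := by
  induction m with
  | zero => simp [qFact, c2]
  | succ k ih =>
    rw [qFact_succ, qFact_succ, c2_succ, pow_add]
    calc qFact qv⁻¹ k * qInt qv⁻¹ (k + 1) * (qv ^ c2 k * qv ^ k)
        = (qFact qv⁻¹ k * qv ^ c2 k) * (qInt qv⁻¹ (k + 1) * qv ^ k) := by ring
      _ = qFact qv k * qInt qv (k + 1) := by rw [ih, qInt_inv]

lemma qFact_inv' (m : ℕ) : (qFact qv⁻¹ m)⁻¹ = qv ^ c2 m * (qFact qv m)⁻¹ := by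
  have h := qFact_inv m
  have h1 := qFactq_inv_ne_zero m
  have h2 := qFactq_ne_zero m
  rw [← qFact_inv m, mul_inv, mul_comm (qFact qv⁻¹ m)⁻¹, ← mul_assoc,
    mul_inv_cancel₀ (pow_ne_zero _ qv_ne_zero), one_mul]

/-- q-binomial coefficients via the q-Pascal recurrence. -/
def qb : ℕ → ℕ → Fq
  | 0, 0 => 1
  | 0, _ + 1 => 0
  | _ + 1, 0 => 1
  | m + 1, k + 1 => qb m k + qv ^ (k + 1) * qb m (k + 1)

lemma qb_eq_zero : ∀ m k : ℕ, m < k → qb m k = 0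
  | 0, k + 1, _ => rfl
  | m + 1, k + 1, h => by
    rw [qb, qb_eq_zero m k (by omega), qb_eq_zero m (k+1) (by omega)]
    ring

lemma qb_diag : ∀ m : ℕ, qb m m = 1
  | 0 => rfl
  | m + 1 => by
    rw [qb, qb_diag m, qb_eq_zero m (m+1) (by omega)]
    ring

lemma qb_zero : ∀ m : ℕ, qb m 0 = 1
  | 0 => rfl
  | _ + 1 => rfl

/-- `[k]_q! · [m-k]_q! · qb m k = [m]_q!` -/
lemma qFact_qb : ∀ m k : ℕ, k ≤ m → qFact qv k * qFact qv (m - k) * qb m k = qFact qv m := by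
  intro m
  induction m with
  | zero => intro k hk; interval_cases k; simp [qb_zero, qFact]
  | succ n ih =>
    intro k hk
    match k with
    | 0 => simp [qb_zero, qFact]
    | k + 1 =>
      rw [qb]
      rcases Nat.lt_or_ge k n with h | h
      · have e1 := ih k (by omega)
        have e2 := ih (k+1) (by omega)
        have hs : n + 1 - (k + 1) = n - k := by omega
        have hs2 : n - k = (n - (k+1)) + 1 := by omega
        rw [hs]
        have fk : qFact qv (k + 1) = qFact qv k * qInt qv (k + 1) := qFact_succ _ _
        have fnk : qFact qv (n - k) = qFact qv (n - (k+1)) * qInt qv (n - k) := by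
          rw [hs2, qFact_succ, ← hs2]
        have key : qInt qv (k + 1) + qv ^ (k + 1) * qInt qv (n - k) = qInt qv (n + 1) := by
          unfold qInt
          rw [Finset.mul_sum, show n + 1 = (k + 1) + (n - k) by omega]
          conv_rhs => rw [Finset.sum_range_add]
          congr 1
          apply Finset.sum_congr rfl
          intro i _
          rw [← pow_add]
        calc qFact qv (k+1) * qFact qv (n-k) * (qb n k + qv^(k+1) * qb n (k+1))
            = qInt qv (k+1) * (qFact qv k * qFact qv (n-k) * qb n k)
              + (qv^(k+1) * qInt qv (n-k)) * (qFact qv (k+1) * qFact qv (n-(k+1)) * qb n (k+1)) := by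
                rw [fk, fnk]; ring
          _ = qInt qv (k+1) * qFact qv n + (qv^(k+1) * qInt qv (n-k)) * qFact qv n := by
                rw [e1, e2]
          _ = (qInt qv (k+1) + qv^(k+1) * qInt qv (n-k)) * qFact qv n := by ring
          _ = qInt qv (n+1) * qFact qv n := by rw [key]
          _ = qFact qv (n+1) := by rw [qFact_succ]; ring
      · -- k = n
        have hk' : k = n := by omega
        subst hk'
        rw [qb_diag, qb_eq_zero k (k+1) (by omega)]
        simp [qFact]

/-- Gauss's identity `∑ (-1)^k q^(k choose 2) [m+1 choose k]_q = 0`. -/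
lemma gauss (m : ℕ) : ∑ k ∈ range (m + 2), (-1 : Fq) ^ k * qv ^ c2 k * qb (m + 1) k = 0 := by
  rw [Finset.sum_range_succ']
  have : ∀ k ∈ range (m + 1),
      (-1 : Fq) ^ (k+1) * qv ^ c2 (k+1) * qb (m + 1) (k+1)
      = (fun j => (-1 : Fq) ^ (j+1) * qv ^ c2 (j+1) * qb m j) k
        - (fun j => (-1 : Fq) ^ (j+1) * qv ^ c2 (j+1) * qb m j) (k+1) := by
    intro k _
    show (-1 : Fq) ^ (k+1) * qv ^ c2 (k+1) * qb (m + 1) (k+1) = _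
    rw [qb]
    simp only []
    rw [c2_succ (k+1), pow_add]
    ring
  rw [Finset.sum_congr rfl this, Finset.sum_range_sub']
  rw [qb_zero, qb_eq_zero m (m+1) (by omega)]
  simp [qb_zero, c2]

/-- The reflected Gauss identity in the form needed for the main theorem. -/
lemma gauss' (n : ℕ) (hn : n ≠ 0) (he : n % 2 = 0) :
    ∑ k ∈ range (n + 1),
      (-1 : Fq) ^ k * qv ^ c2 (n - k) * (qFact qv k)⁻¹ * (qFact qv (n - k))⁻¹ = 0 := by
  have hg := gauss (n - 1)
  rw [show n - 1 + 1 = n by omega, show n - 1 + 2 = n + 1 by omega] at hg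
  have hrefl := Finset.sum_range_reflect
    (fun j => (-1 : Fq) ^ j * qv ^ c2 j * qb n j) (n + 1)
  simp only [show ∀ j, n + 1 - 1 - j = n - j from fun j => by omega] at hrefl
  rw [← hrefl] at hg
  -- hg : ∑ j ∈ range (n+1), (-1)^(n-j) * qv^(c2 (n-j)) * qb n (n-j) = 0
  have key : ∀ k ∈ range (n + 1),
      (-1 : Fq) ^ k * qv ^ c2 (n - k) * (qFact qv k)⁻¹ * (qFact qv (n - k))⁻¹
      = (qFact qv n)⁻¹ * ((-1 : Fq) ^ (n - k) * qv ^ c2 (n - k) * qb n (n - k)) := by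
    intro k hk
    rw [Finset.mem_range] at hk
    have hk' : k ≤ n := by omega
    have hqb := qFact_qb n (n - k) (by omega)
    rw [show n - (n - k) = k by omega] at hqb
    have hsign : (-1 : Fq) ^ (n - k) = (-1 : Fq) ^ k := by
      by_cases hp : k % 2 = 0
      · rw [Even.neg_one_pow (⟨k/2, by omega⟩ : Even k),
          Even.neg_one_pow (⟨(n-k)/2, by omega⟩ : Even (n-k))]
      · rw [Odd.neg_one_pow (⟨k/2, by omega⟩ : Odd k),
          Odd.neg_one_pow (⟨(n-k)/2, by omega⟩ : Odd (n-k))]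
    rw [hsign]
    have h1 := qFactq_ne_zero n
    have h2 := qFactq_ne_zero k
    have h3 := qFactq_ne_zero (n - k)
    field_simp
    linear_combination (-(qv ^ c2 (n - k))) * hqb
  rw [Finset.sum_congr rfl key, ← Finset.mul_sum, hg, mul_zero]

theorem jackson_q_sine_cosine_pair :
    qsin qv * qsin qv⁻¹ + qcos qv * qcos qv⁻¹ = 1 := by
  ext n
  rw [map_add, PowerSeries.coeff_mul, PowerSeries.coeff_mul, PowerSeries.coeff_one,
    Finset.Nat.sum_antidiagonal_eq_sum_range_succ_mk,
    Finset.Nat.sum_antidiagonal_eq_sum_range_succ_mk]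
  simp only [qsin, qcos, coeff_mk]
  by_cases hn0 : n = 0
  · subst hn0
    simp [qFact]
  rw [if_neg hn0]
  by_cases he : n % 2 = 0
  · -- even case
    rw [← Finset.sum_add_distrib]
    have key : ∀ k ∈ range (n + 1),
        ((if k % 2 = 1 then (-1 : Fq) ^ (k / 2) / qFact qv k else 0) *
            (if (n - k) % 2 = 1 then (-1 : Fq) ^ ((n - k) / 2) / qFact qv⁻¹ (n - k) else 0) +
          (if k % 2 = 0 then (-1 : Fq) ^ (k / 2) / qFact qv k else 0) *
            (if (n - k) % 2 = 0 then (-1 : Fq) ^ ((n - k) / 2) / qFact qv⁻¹ (n - k) else 0))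
        = (-1 : Fq) ^ (n / 2) *
            ((-1 : Fq) ^ k * qv ^ c2 (n - k) * (qFact qv k)⁻¹ * (qFact qv (n - k))⁻¹) := by
      intro k hk
      rw [Finset.mem_range] at hk
      have hk' : k ≤ n := by omega
      by_cases hp : k % 2 = 1
      · rw [if_pos hp, if_pos (by omega : (n - k) % 2 = 1),
          if_neg (by omega), if_neg (by omega), mul_zero, add_zero,
          div_eq_mul_inv, div_eq_mul_inv, qFact_inv']
        have hsg : (-1 : Fq) ^ (k / 2) * (-1 : Fq) ^ ((n - k) / 2)
            = (-1 : Fq) ^ (n / 2) * (-1 : Fq) ^ k := by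
          have hk2 : (-1 : Fq) ^ k = -1 := Odd.neg_one_pow ⟨k / 2, by omega⟩
          rw [← pow_add, hk2, show n / 2 = (k / 2 + (n - k) / 2) + 1 by omega, pow_succ]
          ring
        linear_combination (qv ^ c2 (n - k) * (qFact qv k)⁻¹ * (qFact qv (n - k))⁻¹) * hsg
      · rw [if_neg hp, if_neg (by omega : ¬ (n - k) % 2 = 1),
          if_pos (by omega : k % 2 = 0), if_pos (by omega : (n - k) % 2 = 0),
          zero_mul, zero_add, div_eq_mul_inv, div_eq_mul_inv, qFact_inv']
        have hsg : (-1 : Fq) ^ (k / 2) * (-1 : Fq) ^ ((n - k) / 2)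
            = (-1 : Fq) ^ (n / 2) * (-1 : Fq) ^ k := by
          have hk2 : (-1 : Fq) ^ k = 1 := Even.neg_one_pow ⟨k / 2, by omega⟩
          rw [← pow_add, hk2, show k / 2 + (n - k) / 2 = n / 2 by omega]
          ring
        linear_combination (qv ^ c2 (n - k) * (qFact qv k)⁻¹ * (qFact qv (n - k))⁻¹) * hsg
    rw [Finset.sum_congr rfl key, ← Finset.mul_sum, gauss' n hn0 he, mul_zero]
  · -- odd case
    have h1 : ∑ k ∈ range (n + 1),
        (if k % 2 = 1 then (-1 : Fq) ^ (k / 2) / qFact qv k else 0) *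
          (if (n - k) % 2 = 1 then (-1 : Fq) ^ ((n - k) / 2) / qFact qv⁻¹ (n - k) else 0) = 0 := by
      apply Finset.sum_eq_zero
      intro k hk
      rw [Finset.mem_range] at hk
      by_cases hp : k % 2 = 1
      · rw [if_neg (by omega : ¬ (n - k) % 2 = 1), mul_zero]
      · rw [if_neg hp, zero_mul]
    have h2 : ∑ k ∈ range (n + 1),
        (if k % 2 = 0 then (-1 : Fq) ^ (k / 2) / qFact qv k else 0) *
          (if (n - k) % 2 = 0 then (-1 : Fq) ^ ((n - k) / 2) / qFact qv⁻¹ (n - k) else 0) = 0 := by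
      apply Finset.sum_eq_zero
      intro k hk
      rw [Finset.mem_range] at hk
      by_cases hp : k % 2 = 0
      · rw [if_neg (by omega : ¬ (n - k) % 2 = 0), mul_zero]
      · rw [if_neg hp, zero_mul]
    rw [h1, h2, add_zero]
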